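/- Let m ≥ 1 be an integer, let a > 0 and 0 < ε < a, and let λ₁, …, λ_m be real numbers with λ₁ + ⋯ + λ_m ≤ −a·m. Then there exists an index q with 1 ≤ q ≤ m that is ε-regular, i.e., for every i with 1 ≤ i ≤ q one has λ_i + λ_{i+1} + ⋯ + λ_q + (q − i + 1)·ε < 0, and which moreover satisfies λ₁ + ⋯ + λ_q ≤ (−a + ε)·m. -/

import Mathlib

/-- The Pliss-type lemma: if `λ₁ + ⋯ + λ_m ≤ -a·m` and `0 < ε < a`, then there is an
`ε`-regular index `q` with `1 ≤ q ≤ m` satisfying `λ₁ + ⋯ + λ_q ≤ (-a + ε)·m`.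
An index `q` is `ε`-regular if `λ_i + ⋯ + λ_q + (q - i + 1)·ε < 0` for all `1 ≤ i ≤ q`. -/
theorem pliss_lemma_regular_index_exists
    (m : ℕ) (hm : 1 ≤ m) (a ε : ℝ) (ha : 0 < a) (hε : 0 < ε) (hεa : ε < a)
    (lam : ℕ → ℝ) (hsum : ∑ i ∈ Finset.Icc 1 m, lam i ≤ -a * m) :
    ∃ q : ℕ, 1 ≤ q ∧ q ≤ m ∧
      (∀ i : ℕ, 1 ≤ i → i ≤ q →
        (∑ k ∈ Finset.Icc i q, lam k) + ((q - i + 1 : ℕ) : ℝ) * ε < 0) ∧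
      (∑ i ∈ Finset.Icc 1 q, lam i) ≤ (-a + ε) * m := by
  classical
  set T : ℕ → ℝ := fun j => (∑ i ∈ Finset.Ioc 0 j, lam i) + j * ε with hT
  have hIcc : ∀ j : ℕ, Finset.Icc 1 j = Finset.Ioc 0 j := by
    intro j; ext x; simp [Nat.lt_iff_add_one_le]
  have hex : ∃ q, q ≤ m ∧ ∀ k ≤ m, T q ≤ T k := by
    obtain ⟨q, hq, hmin⟩ := Finset.exists_min_image (Finset.Icc 0 m) T ⟨0, by simp⟩
    exact ⟨q, by simpa using hq, fun k hk => hmin k (by simpa using hk)⟩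
  set q := Nat.find hex with hqdef
  obtain ⟨hqm, hqmin⟩ := Nat.find_spec hex
  have hstrict : ∀ j < q, T q < T j := by
    intro j hj
    have h := Nat.find_min hex hj
    push_neg at h
    obtain ⟨k, hk, hk2⟩ := h (le_trans (le_of_lt hj) hqm)
    exact lt_of_le_of_lt (hqmin k hk) hk2
  have hTm : T m ≤ (-a + ε) * m := by
    have : (∑ i ∈ Finset.Ioc 0 m, lam i) ≤ -a * m := by rw [← hIcc]; exact hsum
    simp only [hT]; nlinarith
  have hTq : T q ≤ T m := hqmin m le_rfl
  have hneg : T q < 0 := by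
    have : (-a + ε) * m < 0 := by
      have : (0:ℝ) < m := by exact_mod_cast hm
      nlinarith
    linarith
  have hq1 : 1 ≤ q := by
    by_contra h
    have hq0 : q = 0 := by omega
    rw [hq0] at hneg
    simp [hT] at hneg
  refine ⟨q, hq1, hqm, ?_, ?_⟩
  · intro i hi hiq
    obtain ⟨j, rfl⟩ : ∃ j, i = j + 1 := ⟨i - 1, by omega⟩
    have hjq : j ≤ q := by omega
    have hsplit : (∑ i ∈ Finset.Ioc 0 j, lam i) + (∑ k ∈ Finset.Ioc j q, lam k)
        = ∑ i ∈ Finset.Ioc 0 q, lam i :=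
      Finset.sum_Ioc_consecutive _ (Nat.zero_le j) hjq
    have hIcc2 : Finset.Icc (j+1) q = Finset.Ioc j q := by
      ext x; simp only [Finset.mem_Icc, Finset.mem_Ioc]; omega
    have hcast : ((q - (j+1) + 1 : ℕ) : ℝ) = (q : ℝ) - j := by
      have : q - (j+1) + 1 = q - j := by omega
      rw [this, Nat.cast_sub hjq]
    have hlt := hstrict j (by omega)
    rw [hIcc2, hcast]
    simp only [hT] at hlt
    nlinarith
  · have hq0 : (0:ℝ) ≤ (q:ℝ) * ε := by positivity
    rw [hIcc]
    simp only [hT] at hTq hTm ⊢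
    linarith
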